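/- arXiv:2306.00392 — 7 statements merged into one kernel-verified Lean document; each statement's English description precedes it below -/
import Mathlib

section
/- Fix r > 0. Let u = (u₁, u₂) and v = (v₁, v₂) be points of ℝ² with 0 < u₂ < r, 0 < v₂ < r, and u₁ ≤ v₁. Set a = √(r² − u₂²), b = √(r² − v₂²), and d = v₁ − u₁, and assume d < a + b. Then the circle of radius r centered at (u₁ + a, 0) passes through u, the circle of radius r centered at (v₁ − b, 0) passes through v, these two centers are distinct, and the unique common point of the two circles with strictly positive second coordinate has second coordinate equal to √(r² − ((a + b − d)/2)²). -/
/-- Euclidean distance on ℝ², viewed as pairs. -/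
noncomputable def edist2 (p q : ℝ × ℝ) : ℝ :=
  Real.sqrt ((p.1 - q.1) ^ 2 + (p.2 - q.2) ^ 2)

lemma edist2_eq_iff (p q : ℝ × ℝ) (r : ℝ) (hr : 0 ≤ r) :
    edist2 p q = r ↔ (p.1 - q.1) ^ 2 + (p.2 - q.2) ^ 2 = r ^ 2 := by
  rw [edist2]
  constructor
  · intro h; rw [← h, Real.sq_sqrt (by positivity)]
  · intro h; rw [h, Real.sqrt_sq hr]

/-- With `a = √(r² − u₂²)`, `b = √(r² − v₂²)`, `d = v₁ − u₁ < a + b`: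
the circle of radius `r` centered at `(u₁ + a, 0)` passes through `u`,
the circle of radius `r` centered at `(v₁ − b, 0)` passes through `v`,
the centers are distinct, and the unique common point of the two circles
with strictly positive second coordinate has height `√(r² − ((a+b−d)/2)²)`. -/
theorem penumbral_sup2_height
    (r : ℝ) (hr : 0 < r) (u v : ℝ × ℝ)
    (hu2 : 0 < u.2) (hu2r : u.2 < r) (hv2 : 0 < v.2) (hv2r : v.2 < r)
    (hx : u.1 ≤ v.1)
    (a b d : ℝ)
    (ha : a = Real.sqrt (r ^ 2 - u.2 ^ 2)) (hb : b = Real.sqrt (r ^ 2 - v.2 ^ 2))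
    (hd : d = v.1 - u.1) (hdab : d < a + b) :
    edist2 u (u.1 + a, 0) = r ∧
    edist2 v (v.1 - b, 0) = r ∧
    ((u.1 + a, (0 : ℝ)) : ℝ × ℝ) ≠ (v.1 - b, 0) ∧
    (∃! p : ℝ × ℝ,
        edist2 p (u.1 + a, 0) = r ∧ edist2 p (v.1 - b, 0) = r ∧ 0 < p.2) ∧
    (∀ p : ℝ × ℝ,
        edist2 p (u.1 + a, 0) = r → edist2 p (v.1 - b, 0) = r → 0 < p.2 →
        p.2 = Real.sqrt (r ^ 2 - ((a + b - d) / 2) ^ 2)) := by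
  subst hd
  have ha2 : a ^ 2 = r ^ 2 - u.2 ^ 2 := by
    rw [ha]; exact Real.sq_sqrt (by nlinarith)
  have hb2 : b ^ 2 = r ^ 2 - v.2 ^ 2 := by
    rw [hb]; exact Real.sq_sqrt (by nlinarith)
  have ha0 : 0 ≤ a := ha ▸ Real.sqrt_nonneg _
  have hb0 : 0 ≤ b := hb ▸ Real.sqrt_nonneg _
  have har : a < r := by nlinarith
  have hbr : b < r := by nlinarith
  have hd0 : 0 ≤ v.1 - u.1 := sub_nonneg.mpr hx
  have hcne : u.1 + a ≠ v.1 - b := by intro h; linarith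
  have hy2 : 0 < r ^ 2 - ((a + b - (v.1 - u.1)) / 2) ^ 2 := by nlinarith
  have hy0 : 0 < Real.sqrt (r ^ 2 - ((a + b - (v.1 - u.1)) / 2) ^ 2) :=
    Real.sqrt_pos.mpr hy2
  have hy2' : (Real.sqrt (r ^ 2 - ((a + b - (v.1 - u.1)) / 2) ^ 2)) ^ 2
      = r ^ 2 - ((a + b - (v.1 - u.1)) / 2) ^ 2 := Real.sq_sqrt hy2.le
  have key : ∀ p : ℝ × ℝ,
      edist2 p (u.1 + a, 0) = r → edist2 p (v.1 - b, 0) = r → 0 < p.2 →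
      p.1 = (u.1 + a + (v.1 - b)) / 2 ∧
      p.2 = Real.sqrt (r ^ 2 - ((a + b - (v.1 - u.1)) / 2) ^ 2) := by
    intro p h1 h2 hp2
    rw [edist2_eq_iff _ _ _ hr.le] at h1 h2
    have h1' : (p.1 - (u.1 + a)) ^ 2 + p.2 ^ 2 = r ^ 2 := by
      have := h1; ring_nf at this ⊢; linarith
    have h2' : (p.1 - (v.1 - b)) ^ 2 + p.2 ^ 2 = r ^ 2 := by
      have := h2; ring_nf at this ⊢; linarith
    have hfac : ((v.1 - b) - (u.1 + a)) * (2 * p.1 - (u.1 + a) - (v.1 - b)) = 0 := by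
      linear_combination h1' - h2'
    have hp1 : p.1 = (u.1 + a + (v.1 - b)) / 2 := by
      rcases mul_eq_zero.mp hfac with h | h
      · exact absurd (by linarith : u.1 + a = v.1 - b) hcne
      · linarith
    refine ⟨hp1, ?_⟩
    have hsq : p.2 ^ 2 = r ^ 2 - ((a + b - (v.1 - u.1)) / 2) ^ 2 := by
      rw [hp1] at h1'; linear_combination h1'
    rw [show p.2 = Real.sqrt (p.2 ^ 2) from (Real.sqrt_sq hp2.le).symm, hsq]
  refine ⟨?_, ?_, ?_, ?_, fun p h1 h2 h3 => (key p h1 h2 h3).2⟩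
  · rw [edist2_eq_iff _ _ _ hr.le]
    show (u.1 - (u.1 + a)) ^ 2 + (u.2 - 0) ^ 2 = r ^ 2
    linear_combination ha2
  · rw [edist2_eq_iff _ _ _ hr.le]
    show (v.1 - (v.1 - b)) ^ 2 + (v.2 - 0) ^ 2 = r ^ 2
    linear_combination hb2
  · intro h
    exact hcne (congrArg Prod.fst h)
  · refine ⟨((u.1 + a + (v.1 - b)) / 2,
      Real.sqrt (r ^ 2 - ((a + b - (v.1 - u.1)) / 2) ^ 2)),
      ⟨?_, ?_, hy0⟩, fun p hp => Prod.ext ((key p hp.1 hp.2.1 hp.2.2).1)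
        ((key p hp.1 hp.2.1 hp.2.2).2)⟩
    · rw [edist2_eq_iff _ _ _ hr.le]
      show ((u.1 + a + (v.1 - b)) / 2 - (u.1 + a)) ^ 2 +
        (Real.sqrt (r ^ 2 - ((a + b - (v.1 - u.1)) / 2) ^ 2) - 0) ^ 2 = r ^ 2
      linear_combination hy2'
    · rw [edist2_eq_iff _ _ _ hr.le]
      show ((u.1 + a + (v.1 - b)) / 2 - (v.1 - b)) ^ 2 +
        (Real.sqrt (r ^ 2 - ((a + b - (v.1 - u.1)) / 2) ^ 2) - 0) ^ 2 = r ^ 2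
      linear_combination hy2'
end

section
/- Let s > 0 and let u = (u₁, u₂) and v = (v₁, v₂) be points of ℝ². Define M = max(u₂, v₂, |u₁ − v₁|/(2s) + (u₂ + v₂)/2) and T = {t ∈ ℝ : ∃ x ∈ ℝ, |u₁ − x| ≤ s·(t − u₂) and |v₁ − x| ≤ s·(t − v₂)}. Then M is the least element of T; that is, M ∈ T and M ≤ t for every t ∈ T. -/
/-- `M = max(u₂, v₂, |u₁ − v₁|/(2s) + (u₂ + v₂)/2)` is the least height `t`
for which some umbral cone root `(x, t)` has both `u` and `v` in its cone,
i.e. the least element of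
`T = {t | ∃ x, |u₁ − x| ≤ s(t − u₂) ∧ |v₁ − x| ≤ s(t − v₂)}`. -/
theorem umbral_min_cone_height (s : ℝ) (hs : 0 < s) (u v : ℝ × ℝ) :
    IsLeast
      {t : ℝ | ∃ x : ℝ, |u.1 - x| ≤ s * (t - u.2) ∧ |v.1 - x| ≤ s * (t - v.2)}
      (max u.2 (max v.2 (|u.1 - v.1| / (2 * s) + (u.2 + v.2) / 2))) := by
  obtain ⟨u1, u2⟩ := u
  obtain ⟨v1, v2⟩ := v
  simp only
  set M := max u2 (max v2 (|u1 - v1| / (2 * s) + (u2 + v2) / 2)) with hM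
  have hMu : u2 ≤ M := le_max_left _ _
  have hMv : v2 ≤ M := le_trans (le_max_left _ _) (le_max_right _ _)
  have hMd : |u1 - v1| / (2 * s) + (u2 + v2) / 2 ≤ M :=
    le_trans (le_max_right _ _) (le_max_right _ _)
  have h2s : (0:ℝ) < 2 * s := by positivity
  have hd : |u1 - v1| ≤ s * (M - u2) + s * (M - v2) := by
    have h := (div_le_iff₀ h2s).mp (by linarith : |u1 - v1| / (2 * s) ≤ M - (u2 + v2) / 2)
    nlinarith
  have hup : u1 - v1 ≤ |u1 - v1| := le_abs_self _
  have hdn : -(u1 - v1) ≤ |u1 - v1| := neg_le_abs _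
  constructor
  · set a := s * (M - u2) with ha
    set b := s * (M - v2) with hb
    have ha0 : 0 ≤ a := by nlinarith
    have hb0 : 0 ≤ b := by nlinarith
    refine ⟨min (max v1 (u1 - a)) (u1 + a), ?_, ?_⟩
    · rw [abs_le]
      constructor
      · have := min_le_right (max v1 (u1 - a)) (u1 + a)
        linarith
      · rcases le_total (max v1 (u1 - a)) (u1 + a) with h | h
        · rw [min_eq_left h]
          have : u1 - a ≤ max v1 (u1 - a) := le_max_right _ _
          linarith
        · rw [min_eq_right h]; linarith
    · rcases le_total v1 (u1 - a) with h1 | h1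
      · have hx : min (max v1 (u1 - a)) (u1 + a) = u1 - a := by
          rw [max_eq_right h1, min_eq_left (by linarith)]
        rw [hx, abs_le]
        constructor <;> nlinarith
      · rcases le_total v1 (u1 + a) with h2 | h2
        · have hx : min (max v1 (u1 - a)) (u1 + a) = v1 := by
            rw [max_eq_left h1, min_eq_left h2]
          rw [hx]
          simpa using hb0
        · have hx : min (max v1 (u1 - a)) (u1 + a) = u1 + a := by
            rw [max_eq_left h1, min_eq_right h2]
          rw [hx, abs_le]
          constructor <;> nlinarith
  · rintro t ⟨x, h1, h2⟩
    have h1' := abs_le.mp h1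
    have h2' := abs_le.mp h2
    have hu0 : 0 ≤ s * (t - u2) := le_trans (abs_nonneg _) h1
    have hv0 : 0 ≤ s * (t - v2) := le_trans (abs_nonneg _) h2
    have htu : u2 ≤ t := by nlinarith
    have htv : v2 ≤ t := by nlinarith
    have htri : |u1 - v1| ≤ s * (t - u2) + s * (t - v2) := by
      calc |u1 - v1| ≤ |u1 - x| + |x - v1| := abs_sub_le _ _ _
        _ = |u1 - x| + |v1 - x| := by rw [abs_sub_comm x v1]
        _ ≤ s * (t - u2) + s * (t - v2) := add_le_add h1 h2
    have hdiv : |u1 - v1| / (2 * s) + (u2 + v2) / 2 ≤ t := by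
      rw [div_add' _ _ _ (ne_of_gt h2s), div_le_iff₀ h2s]
      nlinarith
    exact max_le htu (max_le htv hdiv)
end

section
/- Fix r > 0. Let u = (u₁, u₂) and v = (v₁, v₂) be points of ℝ² with 0 < u₂ < r and 0 < v₂ < r. Set a = √(r² − u₂²), b = √(r² − v₂²), and d = |u₁ − v₁|, and assume that (d − a)² + v₂² < r² or d ≤ a. Then max(u₂, v₂, √(r² − ((a + b − d)/2)²)) is the least element of the set T = {t ∈ ℝ : 0 < t < r and there exists w₁ ∈ ℝ such that both u and v lie in cone_r((w₁, t))}. -/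
noncomputable def penumbralCone (r : ℝ) (w : ℝ × ℝ) : Set (ℝ × ℝ) :=
  {z : ℝ × ℝ | 0 < z.2 ∧
    edist2 z (w.1 + Real.sqrt (r ^ 2 - w.2 ^ 2), 0) ≤ r ∧
    edist2 z (w.1 - Real.sqrt (r ^ 2 - w.2 ^ 2), 0) ≤ r}

private lemma sq_le_of_bounds {x c : ℝ} (h1 : x ≤ c) (h2 : -c ≤ x) : x ^ 2 ≤ c ^ 2 := by
  nlinarith

private lemma le_of_sq_le_sq' {x c : ℝ} (h : x ^ 2 ≤ c ^ 2) (hc : 0 ≤ c) : x ≤ c := by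
  nlinarith

private lemma lt_of_sq_lt_sq' {x c : ℝ} (h : x ^ 2 < c ^ 2) (hc : 0 ≤ c) : x < c := by
  nlinarith

private lemma bounds_of_sq_le {x c : ℝ} (h : x ^ 2 ≤ c ^ 2) (hc : 0 ≤ c) :
    -c ≤ x ∧ x ≤ c := by
  constructor <;> nlinarith

private lemma sq_mono' {x y : ℝ} (h0 : 0 ≤ x) (h : x ≤ y) : x ^ 2 ≤ y ^ 2 := by
  nlinarith

private lemma sq_strict_mono' {x y : ℝ} (h0 : 0 ≤ x) (h : x < y) : x ^ 2 < y ^ 2 := by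
  nlinarith

private lemma edist2_le_of_sq (z p : ℝ × ℝ) (r : ℝ) (hr : 0 ≤ r)
    (h : (z.1 - p.1) ^ 2 + (z.2 - p.2) ^ 2 ≤ r ^ 2) : edist2 z p ≤ r := by
  rw [edist2]
  calc Real.sqrt ((z.1 - p.1) ^ 2 + (z.2 - p.2) ^ 2) ≤ Real.sqrt (r ^ 2) :=
        Real.sqrt_le_sqrt h
    _ = r := Real.sqrt_sq hr

private lemma sq_of_edist2_le (z p : ℝ × ℝ) (r : ℝ)
    (h : edist2 z p ≤ r) : (z.1 - p.1) ^ 2 + (z.2 - p.2) ^ 2 ≤ r ^ 2 := by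
  have h0 : 0 ≤ (z.1 - p.1) ^ 2 + (z.2 - p.2) ^ 2 := by positivity
  have h1 := Real.sq_sqrt h0
  rw [edist2] at h
  nlinarith [Real.sqrt_nonneg ((z.1 - p.1) ^ 2 + (z.2 - p.2) ^ 2)]

private lemma mem_penumbralCone_of_sq {r : ℝ} (hr : 0 < r) {z : ℝ × ℝ} {w₁ t : ℝ}
    (hz : 0 < z.2)
    (h1 : (z.1 - (w₁ + Real.sqrt (r ^ 2 - t ^ 2))) ^ 2 + z.2 ^ 2 ≤ r ^ 2)
    (h2 : (z.1 - (w₁ - Real.sqrt (r ^ 2 - t ^ 2))) ^ 2 + z.2 ^ 2 ≤ r ^ 2) :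
    z ∈ penumbralCone r (w₁, t) := by
  refine ⟨hz, ?_, ?_⟩
  · exact edist2_le_of_sq z _ r hr.le (by simpa using h1)
  · exact edist2_le_of_sq z _ r hr.le (by simpa using h2)

private lemma sq_of_mem_penumbralCone {r : ℝ} {z : ℝ × ℝ} {w₁ t : ℝ}
    (h : z ∈ penumbralCone r (w₁, t)) :
    (z.1 - (w₁ + Real.sqrt (r ^ 2 - t ^ 2))) ^ 2 + z.2 ^ 2 ≤ r ^ 2 ∧
    (z.1 - (w₁ - Real.sqrt (r ^ 2 - t ^ 2))) ^ 2 + z.2 ^ 2 ≤ r ^ 2 := by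
  obtain ⟨-, h1, h2⟩ := h
  constructor
  · have := sq_of_edist2_le _ _ _ h1; simpa using this
  · have := sq_of_edist2_le _ _ _ h2; simpa using this

set_option maxHeartbeats 1000000 in
/-- With `a = √(r² − u₂²)`, `b = √(r² − v₂²)`, `d = |u₁ − v₁|`, under the
cone-existence condition `(d − a)² + v₂² < r²` or `d ≤ a`, the quantity
`max(u₂, v₂, √(r² − ((a + b − d)/2)²))` is the least element of the set of
heights `t ∈ (0, r)` of roots of penumbral cones containing both `u` and `v`. -/
theorem penumbral_min_cone_height
    (r : ℝ) (hr : 0 < r) (u v : ℝ × ℝ)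
    (hu2 : 0 < u.2) (hu2r : u.2 < r) (hv2 : 0 < v.2) (hv2r : v.2 < r)
    (a b d : ℝ)
    (ha : a = Real.sqrt (r ^ 2 - u.2 ^ 2)) (hb : b = Real.sqrt (r ^ 2 - v.2 ^ 2))
    (hd : d = |u.1 - v.1|)
    (hex : (d - a) ^ 2 + v.2 ^ 2 < r ^ 2 ∨ d ≤ a) :
    IsLeast
      {t : ℝ | 0 < t ∧ t < r ∧
        ∃ w₁ : ℝ, u ∈ penumbralCone r (w₁, t) ∧ v ∈ penumbralCone r (w₁, t)}
      (max u.2 (max v.2 (Real.sqrt (r ^ 2 - ((a + b - d) / 2) ^ 2)))) := by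
  have hu2sq : u.2 ^ 2 < r ^ 2 := sq_strict_mono' hu2.le hu2r
  have hv2sq : v.2 ^ 2 < r ^ 2 := sq_strict_mono' hv2.le hv2r
  have ha0 : 0 < a := by rw [ha]; exact Real.sqrt_pos.mpr (by linarith)
  have hb0 : 0 < b := by rw [hb]; exact Real.sqrt_pos.mpr (by linarith)
  have ha2 : a ^ 2 = r ^ 2 - u.2 ^ 2 := by rw [ha]; exact Real.sq_sqrt (by linarith)
  have hb2 : b ^ 2 = r ^ 2 - v.2 ^ 2 := by rw [hb]; exact Real.sq_sqrt (by linarith)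
  have hd0 : 0 ≤ d := hd ▸ abs_nonneg _
  have hduv : u.1 - v.1 ≤ d := hd ▸ le_abs_self _
  have hdvu : v.1 - u.1 ≤ d := by rw [hd, abs_sub_comm]; exact le_abs_self _
  have hm0 : 0 < (a + b - d) / 2 := by
    rcases hex with h | h
    · have h1 : (d - a) ^ 2 < b ^ 2 := by linarith
      have h2 : d - a < b := lt_of_sq_lt_sq' h1 hb0.le
      linarith
    · linarith
  set m : ℝ := (a + b - d) / 2 with hm_def
  have hmsq : 0 < m ^ 2 := by positivity
  set c : ℝ := Real.sqrt (r ^ 2 - m ^ 2) with hc_def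
  have hc0 : 0 ≤ c := Real.sqrt_nonneg _
  have hcr : c < r := by
    rcases le_or_gt 0 (r ^ 2 - m ^ 2) with hsg | hsg
    · have hcc : c ^ 2 = r ^ 2 - m ^ 2 := Real.sq_sqrt hsg
      exact lt_of_sq_lt_sq' (by linarith) hr.le
    · rw [hc_def, Real.sqrt_eq_zero'.mpr (by linarith)]; exact hr
  have hc2 : r ^ 2 - c ^ 2 ≤ m ^ 2 := by
    rcases le_or_gt 0 (r ^ 2 - m ^ 2) with hsg | hsg
    · rw [hc_def, Real.sq_sqrt hsg]; linarith
    · linarith [sq_nonneg c]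
  set M : ℝ := max u.2 (max v.2 c) with hM_def
  have hMu : u.2 ≤ M := le_max_left _ _
  have hMv : v.2 ≤ M := le_trans (le_max_left _ _) (le_max_right _ _)
  have hMc : c ≤ M := le_trans (le_max_right _ _) (le_max_right _ _)
  have hM0 : 0 < M := lt_of_lt_of_le hu2 hMu
  have hMr : M < r := max_lt hu2r (max_lt hv2r hcr)
  have hMsqr : M ^ 2 ≤ r ^ 2 := sq_mono' hM0.le hMr.le
  have hMsqu : u.2 ^ 2 ≤ M ^ 2 := sq_mono' hu2.le hMu
  have hMsqv : v.2 ^ 2 ≤ M ^ 2 := sq_mono' hv2.le hMv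
  have hMsqc : c ^ 2 ≤ M ^ 2 := sq_mono' hc0 hMc
  constructor
  · -- membership
    refine ⟨hM0, hMr, ?_⟩
    set s : ℝ := Real.sqrt (r ^ 2 - M ^ 2) with hs_def
    have hs0 : 0 ≤ s := Real.sqrt_nonneg _
    have hs2 : s ^ 2 = r ^ 2 - M ^ 2 := Real.sq_sqrt (by linarith)
    have hsa : s ≤ a := le_of_sq_le_sq' (by linarith) ha0.le
    have hsb : s ≤ b := le_of_sq_le_sq' (by linarith) hb0.le
    have hsm : s ≤ m := le_of_sq_le_sq' (by linarith) hm0.le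
    set w₁ : ℝ := max (u.1 - (a - s)) (v.1 - (b - s)) with hw_def
    have hw1 : u.1 - (a - s) ≤ w₁ := le_max_left _ _
    have hw2 : v.1 - (b - s) ≤ w₁ := le_max_right _ _
    have hw3 : w₁ ≤ u.1 + (a - s) := max_le (by linarith) (by linarith)
    have hw4 : w₁ ≤ v.1 + (b - s) := max_le (by linarith) (by linarith)
    refine ⟨w₁, ?_, ?_⟩
    · refine mem_penumbralCone_of_sq hr hu2 ?_ ?_
      · have hsq : (u.1 - (w₁ + s)) ^ 2 ≤ a ^ 2 :=
          sq_le_of_bounds (by linarith) (by linarith)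
        linarith
      · have hsq : (u.1 - (w₁ - s)) ^ 2 ≤ a ^ 2 :=
          sq_le_of_bounds (by linarith) (by linarith)
        linarith
    · refine mem_penumbralCone_of_sq hr hv2 ?_ ?_
      · have hsq : (v.1 - (w₁ + s)) ^ 2 ≤ b ^ 2 :=
          sq_le_of_bounds (by linarith) (by linarith)
        linarith
      · have hsq : (v.1 - (w₁ - s)) ^ 2 ≤ b ^ 2 :=
          sq_le_of_bounds (by linarith) (by linarith)
        linarith
  · -- lower bound
    rintro t ⟨ht0, htr, w₁, hu_mem, hv_mem⟩
    obtain ⟨Hup, Hum⟩ := sq_of_mem_penumbralCone hu_mem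
    obtain ⟨Hvp, Hvm⟩ := sq_of_mem_penumbralCone hv_mem
    set s : ℝ := Real.sqrt (r ^ 2 - t ^ 2) with hs_def
    have hs0 : 0 ≤ s := Real.sqrt_nonneg _
    have htsq : t ^ 2 ≤ r ^ 2 := sq_mono' ht0.le htr.le
    have hs2 : s ^ 2 = r ^ 2 - t ^ 2 := Real.sq_sqrt (by linarith)
    have Hu1 : (u.1 - w₁ - s) ^ 2 ≤ a ^ 2 := by
      have he : (u.1 - (w₁ + s)) ^ 2 = (u.1 - w₁ - s) ^ 2 := by ring
      linarith
    have Hu2 : (u.1 - w₁ + s) ^ 2 ≤ a ^ 2 := by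
      have he : (u.1 - (w₁ - s)) ^ 2 = (u.1 - w₁ + s) ^ 2 := by ring
      linarith
    have Hv1 : (v.1 - w₁ - s) ^ 2 ≤ b ^ 2 := by
      have he : (v.1 - (w₁ + s)) ^ 2 = (v.1 - w₁ - s) ^ 2 := by ring
      linarith
    have Hv2 : (v.1 - w₁ + s) ^ 2 ≤ b ^ 2 := by
      have he : (v.1 - (w₁ - s)) ^ 2 = (v.1 - w₁ + s) ^ 2 := by ring
      linarith
    obtain ⟨Bu1, -⟩ := bounds_of_sq_le Hu1 ha0.le
    obtain ⟨-, Bu2⟩ := bounds_of_sq_le Hu2 ha0.le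
    obtain ⟨Bv1, -⟩ := bounds_of_sq_le Hv1 hb0.le
    obtain ⟨-, Bv2⟩ := bounds_of_sq_le Hv2 hb0.le
    have hsa : s ≤ a := by linarith
    have hsb : s ≤ b := by linarith
    have hdle : d ≤ a + b - 2 * s := by
      rw [hd]; exact abs_le.mpr ⟨by linarith, by linarith⟩
    have hsm : s ≤ m := by rw [hm_def]; linarith
    have hsa2 : s ^ 2 ≤ a ^ 2 := sq_mono' hs0 hsa
    have hsb2 : s ^ 2 ≤ b ^ 2 := sq_mono' hs0 hsb
    have hsm2 : s ^ 2 ≤ m ^ 2 := sq_mono' hs0 hsm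
    have hta : u.2 ≤ t := le_of_sq_le_sq' (by linarith) ht0.le
    have htb : v.2 ≤ t := le_of_sq_le_sq' (by linarith) ht0.le
    have htc : c ≤ t := by
      rw [hc_def]
      calc Real.sqrt (r ^ 2 - m ^ 2) ≤ Real.sqrt (t ^ 2) :=
            Real.sqrt_le_sqrt (by linarith)
        _ = t := Real.sqrt_sq ht0.le
    exact max_le hta (max_le htb htc)
end

section
/- Fix r > 0. Let u = (u₁, u₂) and v = (v₁, v₂) be points of ℝ² with 0 < u₂ < r and 0 < v₂ < r. Set a = √(r² − u₂²) and d = |u₁ − v₁|. Then there exists w = (w₁, w₂) with 0 < w₂ < r such that both u and v lie in cone_r(w) if and only if (d − a)² + v₂² < r² or d ≤ a. -/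
lemma edist2_le_iff (p : ℝ × ℝ) (c r : ℝ) (hr : 0 ≤ r) :
    edist2 p (c, 0) ≤ r ↔ (p.1 - c) ^ 2 + p.2 ^ 2 ≤ r ^ 2 := by
  unfold edist2
  constructor
  · intro h
    have hx : (0:ℝ) ≤ (p.1 - c) ^ 2 + (p.2 - 0) ^ 2 := by positivity
    nlinarith [Real.sq_sqrt hx, Real.sqrt_nonneg ((p.1 - c) ^ 2 + (p.2 - 0) ^ 2)]
  · intro h
    have h' : (p.1 - c) ^ 2 + (p.2 - 0) ^ 2 ≤ r ^ 2 := by nlinarith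
    calc Real.sqrt ((p.1 - c) ^ 2 + (p.2 - 0) ^ 2) ≤ Real.sqrt (r ^ 2) :=
          Real.sqrt_le_sqrt h'
      _ = r := Real.sqrt_sq hr

set_option maxHeartbeats 1600000 in
/-- With `a = √(r² − u₂²)` and `d = |u₁ − v₁|`, there exists a penumbral cone
(rooted at some `w` with `0 < w₂ < r`) containing both `u` and `v` if and only
if `(d − a)² + v₂² < r²` or `d ≤ a`. -/
theorem penumbral_cone_existence_criterion
    (r : ℝ) (hr : 0 < r) (u v : ℝ × ℝ)
    (hu2 : 0 < u.2) (hu2r : u.2 < r) (hv2 : 0 < v.2) (hv2r : v.2 < r)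
    (a d : ℝ)
    (ha : a = Real.sqrt (r ^ 2 - u.2 ^ 2)) (hd : d = |u.1 - v.1|) :
    (∃ w : ℝ × ℝ, 0 < w.2 ∧ w.2 < r ∧
        u ∈ penumbralCone r w ∧ v ∈ penumbralCone r w) ↔
      (d - a) ^ 2 + v.2 ^ 2 < r ^ 2 ∨ d ≤ a := by
  set b := Real.sqrt (r ^ 2 - v.2 ^ 2) with hb
  have hru : (0:ℝ) < r ^ 2 - u.2 ^ 2 := by nlinarith
  have hrv : (0:ℝ) < r ^ 2 - v.2 ^ 2 := by nlinarith
  have ha2 : a ^ 2 = r ^ 2 - u.2 ^ 2 := by rw [ha]; exact Real.sq_sqrt hru.le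
  have hb2 : b ^ 2 = r ^ 2 - v.2 ^ 2 := Real.sq_sqrt hrv.le
  have ha0 : 0 < a := by rw [ha]; exact Real.sqrt_pos.2 hru
  have hb0 : 0 < b := Real.sqrt_pos.2 hrv
  have har : a < r := by nlinarith
  have hd0 : 0 ≤ d := hd ▸ abs_nonneg _
  constructor
  · rintro ⟨w, hw0, hwr, ⟨_, hu1, hu1'⟩, ⟨_, hv1, hv1'⟩⟩
    set s := Real.sqrt (r ^ 2 - w.2 ^ 2) with hs
    have hrw : (0:ℝ) < r ^ 2 - w.2 ^ 2 := by nlinarith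
    have hs0 : 0 < s := Real.sqrt_pos.2 hrw
    rw [edist2_le_iff _ _ _ hr.le] at hu1 hu1' hv1 hv1'
    -- horizontal bounds
    obtain ⟨hA1, hA1'⟩ := abs_le_of_sq_le_sq'
      (show (u.1 - (w.1 + s)) ^ 2 ≤ a ^ 2 by linarith) ha0.le
    obtain ⟨hA2, hA2'⟩ := abs_le_of_sq_le_sq'
      (show (u.1 - (w.1 - s)) ^ 2 ≤ a ^ 2 by linarith) ha0.le
    obtain ⟨hB1, hB1'⟩ := abs_le_of_sq_le_sq'
      (show (v.1 - (w.1 + s)) ^ 2 ≤ b ^ 2 by linarith) hb0.le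
    obtain ⟨hB2, hB2'⟩ := abs_le_of_sq_le_sq'
      (show (v.1 - (w.1 - s)) ^ 2 ≤ b ^ 2 by linarith) hb0.le
    have hdab : d < a + b := by
      rw [hd]
      rcases abs_cases (u.1 - v.1) with ⟨h1, _⟩ | ⟨h1, _⟩ <;> rw [h1] <;> linarith
    rcases le_or_gt d a with h | h
    · exact Or.inr h
    · left
      have h1 : 0 < d - a := by linarith
      have h2 : d - a < b := by linarith
      nlinarith
  · intro h
    have hdab : d < a + b := by
      rcases h with h | h
      · by_contra hc
        push_neg at hc
        have h1 : b ≤ d - a := by linarith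
        nlinarith
      · linarith
    have habs : |u.1 - v.1| < a + b := by rw [hd] at hdab; exact hdab
    rw [abs_lt] at habs
    set L := max (u.1 - a) (v.1 - b) with hL
    set R := min (u.1 + a) (v.1 + b) with hR
    have hLR : L < R := by
      rw [hL, hR]
      rcases max_cases (u.1 - a) (v.1 - b) with ⟨h1, _⟩ | ⟨h1, _⟩ <;>
        rcases min_cases (u.1 + a) (v.1 + b) with ⟨h2, _⟩ | ⟨h2, _⟩ <;>
        rw [h1, h2] <;> linarith
    set s := (R - L) / 2 with hsdef
    have hs0 : 0 < s := by rw [hsdef]; linarith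
    have hsa : s ≤ a := by
      have h1 : R ≤ u.1 + a := min_le_left _ _
      have h2 : u.1 - a ≤ L := le_max_left _ _
      rw [hsdef]; linarith
    have hsr : s < r := lt_of_le_of_lt hsa har
    set w2 := Real.sqrt (r ^ 2 - s ^ 2) with hw2
    have hrs : (0:ℝ) < r ^ 2 - s ^ 2 := by nlinarith
    have hw20 : 0 < w2 := Real.sqrt_pos.2 hrs
    have hw22 : w2 ^ 2 = r ^ 2 - s ^ 2 := Real.sq_sqrt hrs.le
    have hw2r : w2 < r := by nlinarith
    have hss : Real.sqrt (r ^ 2 - w2 ^ 2) = s := by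
      rw [hw22]
      have : r ^ 2 - (r ^ 2 - s ^ 2) = s ^ 2 := by ring
      rw [this, Real.sqrt_sq hs0.le]
    refine ⟨((L + R) / 2, w2), hw20, hw2r, ?_, ?_⟩ <;>
      refine ⟨by assumption, ?_, ?_⟩ <;>
      simp only [hss] <;>
      rw [edist2_le_iff _ _ _ hr.le]
    · -- u, center (L+R)/2 + s = R
      have h1 : R ≤ u.1 + a := min_le_left _ _
      have h2 : u.1 - a ≤ L := le_max_left _ _
      have : ((L + R) / 2 + s) = R := by rw [hsdef]; ring
      rw [this]; nlinarith
    · have h1 : R ≤ u.1 + a := min_le_left _ _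
      have h2 : u.1 - a ≤ L := le_max_left _ _
      have : ((L + R) / 2 - s) = L := by rw [hsdef]; ring
      rw [this]; nlinarith
    · have h1 : R ≤ v.1 + b := min_le_right _ _
      have h2 : v.1 - b ≤ L := le_max_right _ _
      have : ((L + R) / 2 + s) = R := by rw [hsdef]; ring
      rw [this]; nlinarith
    · have h1 : R ≤ v.1 + b := min_le_right _ _
      have h2 : v.1 - b ≤ L := le_max_right _ _
      have : ((L + R) / 2 - s) = L := by rw [hsdef]; ring
      rw [this]; nlinarith
end

section
/- Fix r > 0 and γ > 0. Define H : ℝ² × ℝ² → ℝ on the set D = {(u, v) = ((u₁, u₂), (v₁, v₂)) : 0 < u₂ < r, 0 < v₂ < r} by: writing a = √(r² − u₂²), b = √(r² − v₂²), d = |u₁ − v₁|, set H(u, v) = max(u₂, v₂, √(r² − ((a + b − d)/2)²)) if (d − a)² + v₂² < r² or d ≤ a, and H(u, v) = √(((d² + u₂² − v₂²)/(2d))² + v₂²) otherwise. Then H is continuous on D, and hence so is the penumbral attention kernel K(u, v) = exp(−γ·H(u, v)). -/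
open Classical

/-- The height function of penumbral attention: on a pair `(u, v)`, writing
`a = √(r² − u₂²)`, `b = √(r² − v₂²)`, `d = |u₁ − v₁|`, it is
`max(u₂, v₂, √(r² − ((a + b − d)/2)²))` if a cone containing `u` and `v`
exists (`(d − a)² + v₂² < r²` or `d ≤ a`), and
`√(((d² + u₂² − v₂²)/(2d))² + v₂²)` otherwise. -/
noncomputable def penumbralHeight (r : ℝ) (p : (ℝ × ℝ) × (ℝ × ℝ)) : ℝ :=
  let u := p.1
  let v := p.2
  let a := Real.sqrt (r ^ 2 - u.2 ^ 2)
  let b := Real.sqrt (r ^ 2 - v.2 ^ 2)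
  let d := |u.1 - v.1|
  if (d - a) ^ 2 + v.2 ^ 2 < r ^ 2 ∨ d ≤ a then
    max u.2 (max v.2 (Real.sqrt (r ^ 2 - ((a + b - d) / 2) ^ 2)))
  else
    Real.sqrt (((d ^ 2 + u.2 ^ 2 - v.2 ^ 2) / (2 * d)) ^ 2 + v.2 ^ 2)

theorem penumbralHeight_main (r : ℝ) (hr : 0 < r) :
    ContinuousOn (penumbralHeight r)
      {p : (ℝ × ℝ) × (ℝ × ℝ) | 0 < p.1.2 ∧ p.1.2 < r ∧ 0 < p.2.2 ∧ p.2.2 < r} := by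
  set S : Set ((ℝ × ℝ) × (ℝ × ℝ)) :=
    {p | 0 < p.1.2 ∧ p.1.2 < r ∧ 0 < p.2.2 ∧ p.2.2 < r} with hS
  set A : (ℝ × ℝ) × (ℝ × ℝ) → ℝ := fun p => Real.sqrt (r ^ 2 - p.1.2 ^ 2) with hAdef
  set B : (ℝ × ℝ) × (ℝ × ℝ) → ℝ := fun p => Real.sqrt (r ^ 2 - p.2.2 ^ 2) with hBdef
  set D : (ℝ × ℝ) × (ℝ × ℝ) → ℝ := fun p => |p.1.1 - p.2.1| with hDdef
  have hAc : Continuous A := by fun_prop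
  have hBc : Continuous B := by fun_prop
  have hDc : Continuous D := by fun_prop
  -- the condition set
  set C : Set ((ℝ × ℝ) × (ℝ × ℝ)) :=
    {p | (D p - A p) ^ 2 + p.2.2 ^ 2 < r ^ 2 ∨ D p ≤ A p} with hC
  -- closure of complement is inside {A ≤ D}
  have hclc : closure Cᶜ ⊆ {p | A p ≤ D p} := by
    apply closure_minimal
    · intro p hp
      simp only [hC, Set.mem_compl_iff, Set.mem_setOf_eq, not_or, not_lt, not_le] at hp
      exact hp.2.le
    · exact isClosed_le hAc hDc
  have key : ContinuousOn (fun p : (ℝ × ℝ) × (ℝ × ℝ) =>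
      if (D p - A p) ^ 2 + p.2.2 ^ 2 < r ^ 2 ∨ D p ≤ A p then
        max p.1.2 (max p.2.2 (Real.sqrt (r ^ 2 - ((A p + B p - D p) / 2) ^ 2)))
      else
        Real.sqrt (((D p ^ 2 + p.1.2 ^ 2 - p.2.2 ^ 2) / (2 * D p)) ^ 2 + p.2.2 ^ 2)) S := by
    apply ContinuousOn.if
    · -- frontier equality
      intro p hp
      obtain ⟨hpS, hpF⟩ := hp
      have hpF' : p ∈ frontier C := hpF
      obtain ⟨hu0, hur, hv0, hvr⟩ := hpS
      have hApos : 0 < A p := Real.sqrt_pos.mpr (by nlinarith)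
      have hBpos : 0 < B p := Real.sqrt_pos.mpr (by nlinarith)
      have hA2 : A p ^ 2 = r ^ 2 - p.1.2 ^ 2 := Real.sq_sqrt (by nlinarith)
      have hB2 : B p ^ 2 = r ^ 2 - p.2.2 ^ 2 := Real.sq_sqrt (by nlinarith)
      -- not in interior: the open strict-inequality part fails
      have h1 : r ^ 2 ≤ (D p - A p) ^ 2 + p.2.2 ^ 2 := by
        by_contra h
        push_neg at h
        have hopen : IsOpen {q : (ℝ × ℝ) × (ℝ × ℝ) | (D q - A q) ^ 2 + q.2.2 ^ 2 < r ^ 2} :=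
          isOpen_lt (by fun_prop) continuous_const
        have hsub : {q : (ℝ × ℝ) × (ℝ × ℝ) | (D q - A q) ^ 2 + q.2.2 ^ 2 < r ^ 2} ⊆ C := by
          intro q hq; exact Or.inl hq
        exact hpF'.2 (interior_maximal hsub hopen h)
      -- in closure of complement: A ≤ D
      have h2 : A p ≤ D p := by
        apply hclc
        rw [← frontier_compl] at hpF'
        exact hpF'.1
      -- in closure of C
      have h3 : (D p - A p) ^ 2 + p.2.2 ^ 2 ≤ r ^ 2 ∨ D p ≤ A p := by
        have : closure C ⊆ {q | (D q - A q) ^ 2 + q.2.2 ^ 2 ≤ r ^ 2} ∪ {q | D q ≤ A q} := by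
          apply closure_minimal
          · intro q hq
            rcases hq with h | h
            · exact Or.inl h.le
            · exact Or.inr h
          · exact (isClosed_le (by fun_prop) continuous_const).union (isClosed_le hDc hAc)
        exact this hpF'.1
      have hd : D p = A p + B p := by
        rcases h3 with h3 | h3
        · have heq : (D p - A p) ^ 2 = B p ^ 2 := by linarith
          nlinarith [hBpos.le, h2]
        · exfalso
          have : D p = A p := le_antisymm h3 h2
          rw [this] at h1
          nlinarith
      have hDpos : 0 < D p := by linarith
      -- compute both sides equal r
      have lhs : max p.1.2 (max p.2.2 (Real.sqrt (r ^ 2 - ((A p + B p - D p) / 2) ^ 2))) = r := by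
        rw [hd]
        simp only [sub_self]
        norm_num
        rw [Real.sqrt_sq hr.le]
        rw [max_eq_right hvr.le, max_eq_right hur.le]
      have rhs : Real.sqrt (((D p ^ 2 + p.1.2 ^ 2 - p.2.2 ^ 2) / (2 * D p)) ^ 2 + p.2.2 ^ 2) = r := by
        have hnum : D p ^ 2 + p.1.2 ^ 2 - p.2.2 ^ 2 = B p * (2 * D p) := by
          rw [hd]; linear_combination hA2 - hB2
        rw [hnum, mul_div_cancel_right₀ _ (by positivity)]
        have : B p ^ 2 + p.2.2 ^ 2 = r ^ 2 := by linarith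
        rw [this, Real.sqrt_sq hr.le]
      rw [lhs, rhs]
    · -- first branch continuous
      exact (by fun_prop : Continuous fun p : (ℝ × ℝ) × (ℝ × ℝ) =>
        max p.1.2 (max p.2.2 (Real.sqrt (r ^ 2 - ((A p + B p - D p) / 2) ^ 2)))).continuousOn
    · -- second branch continuous where D ≠ 0
      have hne : ∀ p ∈ S ∩ closure {a | ¬((D a - A a) ^ 2 + a.2.2 ^ 2 < r ^ 2 ∨ D a ≤ A a)},
          2 * D p ≠ 0 := by
        intro p hp
        obtain ⟨hpS, hpc⟩ := hp
        obtain ⟨hu0, hur, hv0, hvr⟩ := hpS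
        have hApos : 0 < A p := Real.sqrt_pos.mpr (by nlinarith)
        have hAD : A p ≤ D p := hclc hpc
        have : 0 < D p := lt_of_lt_of_le hApos hAD
        linarith
      apply ContinuousOn.sqrt
      apply ContinuousOn.add
      · apply ContinuousOn.pow
        exact ContinuousOn.div (by fun_prop) (by fun_prop) hne
      · fun_prop
  exact key

/-- The penumbral height function `H`, and hence the penumbral attention
kernel `K(u, v) = exp(−γ·H(u, v))`, is continuous on the domain
`D = {((u₁, u₂), (v₁, v₂)) : 0 < u₂ < r, 0 < v₂ < r}`. -/
theorem penumbralHeight_continuousOn (r γ : ℝ) (hr : 0 < r) (hγ : 0 < γ) :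
    ContinuousOn (penumbralHeight r)
      {p : (ℝ × ℝ) × (ℝ × ℝ) | 0 < p.1.2 ∧ p.1.2 < r ∧ 0 < p.2.2 ∧ p.2.2 < r} ∧
    ContinuousOn (fun p => Real.exp (-γ * penumbralHeight r p))
      {p : (ℝ × ℝ) × (ℝ × ℝ) | 0 < p.1.2 ∧ p.1.2 < r ∧ 0 < p.2.2 ∧ p.2.2 < r} := by
  have h := penumbralHeight_main r hr
  exact ⟨h, Real.continuous_exp.comp_continuousOn (continuousOn_const.mul h)⟩
end

section
/- Let γ > 0, r > 0, t > 0, and let u', v'₁, …, v'ₙ be points of a Euclidean space ℝ^m with n ≥ 1. Define the umbral attention kernel at equal heights by K(u', w') = exp(−γ·max(t, t, ‖u' − w'‖/(2·sinh r) + (t + t)/2)) and the Laplacian kernel by L(u', w') = exp(−(γ/(2·sinh r))·‖u' − w'‖). Then K(u', w') = exp(−γt)·L(u', w') for every w', and consequently for every i, K(u', v'ᵢ) / Σⱼ K(u', v'ⱼ) = L(u', v'ᵢ) / Σⱼ L(u', v'ⱼ). -/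
open Finset in
/-- Umbral attention at a common height `t` (on a common horosphere) is a
positive multiple of the Laplacian kernel, so after softmax normalization the
two kernels agree. -/
theorem umbral_attention_eq_laplacian_on_horosphere
    (γ r t : ℝ) (hγ : 0 < γ) (hr : 0 < r) (ht : 0 < t)
    (m n : ℕ) (hn : 1 ≤ n)
    (u' : EuclideanSpace ℝ (Fin m)) (v' : Fin n → EuclideanSpace ℝ (Fin m))
    (K L : EuclideanSpace ℝ (Fin m) → ℝ)
    (hK : ∀ w', K w' =
      Real.exp (-γ * max t (max t (‖u' - w'‖ / (2 * Real.sinh r) + (t + t) / 2))))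
    (hL : ∀ w', L w' = Real.exp (-(γ / (2 * Real.sinh r)) * ‖u' - w'‖)) :
    (∀ w', K w' = Real.exp (-γ * t) * L w') ∧
    ∀ i : Fin n,
      K (v' i) / ∑ j : Fin n, K (v' j) = L (v' i) / ∑ j : Fin n, L (v' j) := by
  have hsinh : 0 < Real.sinh r := Real.sinh_pos_iff.mpr hr
  have key : ∀ w', K w' = Real.exp (-γ * t) * L w' := by
    intro w'
    have hx : 0 ≤ ‖u' - w'‖ / (2 * Real.sinh r) :=
      div_nonneg (norm_nonneg _) (by positivity)
    have hmax : max t (max t (‖u' - w'‖ / (2 * Real.sinh r) + (t + t) / 2))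
        = ‖u' - w'‖ / (2 * Real.sinh r) + t := by
      have h1 : t ≤ ‖u' - w'‖ / (2 * Real.sinh r) + t := by linarith
      rw [show (t + t) / 2 = t by ring, max_eq_right h1, max_eq_right h1]
    rw [hK, hL, hmax, ← Real.exp_add]
    ring_nf
  refine ⟨key, fun i => ?_⟩
  have hsum : ∑ j : Fin n, K (v' j) = Real.exp (-γ * t) * ∑ j : Fin n, L (v' j) := by
    rw [Finset.mul_sum]; exact Finset.sum_congr rfl fun j _ => key (v' j)
  rw [key (v' i), hsum, mul_div_mul_left _ _ (Real.exp_ne_zero _)]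
end

section
/- Let (P, ≤) be a finite partial order with n ≥ 1 elements such that for every x ∈ P, the set {y ∈ P : y ≤ x} is a chain. Then there exists a bijection e : Fin n → P such that the sign matrix S : Fin n → Fin n → ℤ defined by S i j = 1 if e(i) ≤ e(j) and S i j = −1 otherwise satisfies: for every row index i, the number of column indices j with j + 1 < n and S i j ≠ S i (j+1) is at most 2. -/
open Classical

noncomputable section ForestAux

variable {P : Type*} [Fintype P] [PartialOrder P]

/-- The principal down-set of `x` as a `Finset`. -/
def Dset (x : P) : Finset P := Finset.univ.filter (fun z => z ≤ x)

lemma mem_Dset {z x : P} : z ∈ Dset x ↔ z ≤ x := by simp [Dset]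

lemma Dset_card_pos (x : P) : 1 ≤ (Dset x).card :=
  Finset.card_pos.mpr ⟨x, mem_Dset.mpr le_rfl⟩

lemma Dset_card_le (x : P) : (Dset x).card ≤ Fintype.card P :=
  Finset.card_le_card (Finset.subset_univ _) |>.trans_eq (Finset.card_univ)

lemma Dset_subset {x y : P} (h : x ≤ y) : Dset x ⊆ Dset y := by
  intro z hz; exact mem_Dset.mpr ((mem_Dset.mp hz).trans h)

lemma Dset_card_lt {x y : P} (h : x < y) : (Dset x).card < (Dset y).card := by
  apply Finset.card_lt_card
  exact ⟨Dset_subset h.le, fun hs => (h.not_ge (mem_Dset.mp (hs (mem_Dset.mpr le_rfl))))⟩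

variable (hchain : ∀ x : P, IsChain (· ≤ ·) {y : P | y ≤ x})
include hchain

/-- In a forest order, among elements below `y`, down-set cardinality decides order. -/
lemma le_of_card_le {x z y : P} (hx : x ≤ y) (hz : z ≤ y)
    (h : (Dset z).card ≤ (Dset x).card) : z ≤ x := by
  rcases eq_or_ne z x with rfl | hne
  · exact le_rfl
  · rcases hchain y hz hx hne with h1 | h1
    · exact h1
    · -- x ≤ z, so Dset x ⊆ Dset z with card ≥, hence equal
      have hsub := Dset_subset h1
      have : Dset x = Dset z := Finset.eq_of_subset_of_card_le hsub h
      have : z ∈ Dset x := this ▸ mem_Dset.mpr (le_refl z)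
      exact mem_Dset.mp this

/-- Existence and uniqueness of the ancestor at each depth. -/
lemma exists_anc {x : P} {j : ℕ} (hj : j + 1 ≤ (Dset x).card) :
    ∃ z, z ≤ x ∧ (Dset z).card = j + 1 := by
  classical
  set m := (Dset x).card with hm
  have hinj : Set.InjOn (fun z => (Dset z).card) ((Dset x : Finset P) : Set P) := by
    intro a ha b hb hab
    rw [Finset.mem_coe] at ha hb
    have h1 : a ≤ b := le_of_card_le hchain (mem_Dset.mp hb) (mem_Dset.mp ha) (le_of_eq hab)
    have h2 : b ≤ a := le_of_card_le hchain (mem_Dset.mp ha) (mem_Dset.mp hb) (le_of_eq hab.symm)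
    exact le_antisymm h1 h2
  have hsub : (Dset x).image (fun z => (Dset z).card) ⊆ Finset.Icc 1 m := by
    intro c hc
    simp only [Finset.mem_image] at hc
    obtain ⟨z, hz, rfl⟩ := hc
    exact Finset.mem_Icc.mpr ⟨Dset_card_pos z, Finset.card_le_card (Dset_subset (mem_Dset.mp hz))⟩
  have hcardim : ((Dset x).image (fun z => (Dset z).card)).card = m :=
    (Finset.card_image_of_injOn hinj)
  have : (Dset x).image (fun z => (Dset z).card) = Finset.Icc 1 m := by
    apply Finset.eq_of_subset_of_card_le hsub
    rw [hcardim, Nat.card_Icc]; omega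
  have hmem : j + 1 ∈ (Dset x).image (fun z => (Dset z).card) := by
    rw [this, Finset.mem_Icc]; omega
  simp only [Finset.mem_image] at hmem
  obtain ⟨z, hz, hzc⟩ := hmem
  exact ⟨z, mem_Dset.mp hz, hzc⟩

lemma anc_unique {x z w : P} (hz : z ≤ x) (hw : w ≤ x)
    (h : (Dset z).card = (Dset w).card) : z = w :=
  le_antisymm (le_of_card_le hchain hw hz h.le) (le_of_card_le hchain hz hw h.ge)


/-- The set of ancestors of `x` at depth `j+1`. -/
def Aset (x : P) (j : ℕ) : Finset P :=
  Finset.univ.filter (fun z => z ≤ x ∧ (Dset z).card = j + 1)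

omit hchain in
lemma mem_Aset {x z : P} {j : ℕ} : z ∈ Aset x j ↔ z ≤ x ∧ (Dset z).card = j + 1 := by
  simp [Aset]

lemma Aset_eq_singleton {x : P} {j : ℕ} (hj : j + 1 ≤ (Dset x).card) :
    ∃ z, z ≤ x ∧ (Dset z).card = j + 1 ∧ Aset x j = {z} := by
  obtain ⟨z, hz1, hz2⟩ := exists_anc hchain hj
  refine ⟨z, hz1, hz2, ?_⟩
  apply Finset.eq_singleton_iff_unique_mem.mpr
  refine ⟨mem_Aset.mpr ⟨hz1, hz2⟩, fun w hw => ?_⟩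
  obtain ⟨hw1, hw2⟩ := mem_Aset.mp hw
  exact anc_unique hchain hw1 hz1 (hw2.trans hz2.symm)

omit hchain in
lemma Aset_eq_empty {x : P} {j : ℕ} (hj : (Dset x).card < j + 1) : Aset x j = ∅ := by
  apply Finset.eq_empty_of_forall_notMem
  intro z hz
  obtain ⟨hz1, hz2⟩ := mem_Aset.mp hz
  have := Finset.card_le_card (Dset_subset hz1)
  omega

lemma Aset_agree {x y : P} (hxy : x ≤ y) {j : ℕ} (hj : j + 1 ≤ (Dset x).card) :
    Aset x j = Aset y j := by
  ext z
  simp only [mem_Aset]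
  constructor
  · rintro ⟨h1, h2⟩; exact ⟨h1.trans hxy, h2⟩
  · rintro ⟨h1, h2⟩
    exact ⟨le_of_card_le hchain hxy h1 (by omega), h2⟩

lemma Aset_self (x : P) : Aset x ((Dset x).card - 1) = {x} := by
  have h1 : (Dset x).card - 1 + 1 = (Dset x).card := by
    have := Dset_card_pos x; omega
  obtain ⟨z, hz1, hz2, hz3⟩ := Aset_eq_singleton hchain (le_of_eq h1)
  rw [hz3]
  congr 1
  exact anc_unique hchain hz1 le_rfl (by omega)

variable (g : P → ℕ) (hg : Function.Injective g) (hg1 : ∀ z, 1 ≤ g z)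

/-- The key word of `x`: entry `j` is `g` of the depth-`(j+1)` ancestor of `x`, or `0`. -/
def keyval (x : P) (j : ℕ) : ℕ := (Aset x j).sum g

omit hchain hg hg1 in
lemma keyval_eq_zero {x : P} {j : ℕ} (hj : (Dset x).card < j + 1) : keyval g x j = 0 := by
  rw [keyval, Aset_eq_empty hj, Finset.sum_empty]

include hg1 in
lemma keyval_pos {x : P} {j : ℕ} (hj : j + 1 ≤ (Dset x).card) : 1 ≤ keyval g x j := by
  obtain ⟨z, _, _, hz3⟩ := Aset_eq_singleton hchain hj
  rw [keyval, hz3, Finset.sum_singleton]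
  exact hg1 z

lemma keyval_agree {x y : P} (hxy : x ≤ y) {j : ℕ} (hj : j + 1 ≤ (Dset x).card) :
    keyval g x j = keyval g y j := by
  rw [keyval, keyval, Aset_agree hchain hxy hj]

lemma keyval_self (x : P) : keyval g x ((Dset x).card - 1) = g x := by
  rw [keyval, Aset_self hchain, Finset.sum_singleton]

include hg hg1 in
/-- Recovery: if the key of `b` at depth of `x` equals `g x`, then `x ≤ b`. -/
lemma le_of_keyval_eq {x b : P} (h : keyval g b ((Dset x).card - 1) = g x) : x ≤ b := by
  set j := (Dset x).card - 1 with hj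
  by_cases hc : j + 1 ≤ (Dset b).card
  · obtain ⟨z, hz1, hz2, hz3⟩ := Aset_eq_singleton hchain hc
    rw [keyval, hz3, Finset.sum_singleton] at h
    exact (hg h) ▸ hz1
  · rw [keyval_eq_zero g (by omega)] at h
    exact absurd h.symm (by have := hg1 x; omega)


variable {n : ℕ} (hcard : Fintype.card P = n)

/-- The full key of `x` as a function `Fin n → ℕ`. -/
def pkey (x : P) : Fin n → ℕ := fun j => keyval g x j.val

omit hchain hg hg1 in
include hcard in
lemma depth_lt {x : P} : (Dset x).card - 1 < n := by
  have h1 := Dset_card_pos x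
  have h2 := Dset_card_le x
  omega

include hcard hg1 in
lemma pkey_lt_of_lt {x y : P} (hxy : x < y) :
    toLex (pkey g (n := n) x) < toLex (pkey g y) := by
  have hd : (Dset x).card < (Dset y).card := Dset_card_lt hxy
  have hdn : (Dset x).card < n := by have := Dset_card_le y; omega
  refine ⟨⟨(Dset x).card, hdn⟩, fun j hj => ?_, ?_⟩
  · exact keyval_agree hchain g hxy.le (by exact_mod_cast Nat.succ_le_of_lt hj)
  · have h0 : keyval g x (Dset x).card = 0 := keyval_eq_zero g (by omega)
    have h1 : 1 ≤ keyval g y (Dset x).card := keyval_pos hchain g hg1 (by omega)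
    show keyval g x (Dset x).card < keyval g y (Dset x).card
    omega

include hcard hg1 in
lemma pkey_le_of_le {x y : P} (hxy : x ≤ y) :
    toLex (pkey g (n := n) x) ≤ toLex (pkey g y) := by
  rcases eq_or_lt_of_le hxy with rfl | h
  · exact le_rfl
  · exact (pkey_lt_of_lt hchain g hg1 hcard h).le

include hcard hg hg1 in
lemma pkey_injective : Function.Injective (fun x : P => toLex (pkey g (n := n) x)) := by
  intro x y h
  have h' : pkey g (n := n) x = pkey g y := toLex.injective.eq_iff.mp h
  have key : ∀ a b : P, pkey g (n := n) a = pkey g b → a ≤ b := by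
    intro a b hab
    apply le_of_keyval_eq hchain g hg hg1
    have h1 := congrFun hab ⟨(Dset a).card - 1, depth_lt hcard⟩
    simp only [pkey] at h1
    rw [← h1]
    exact keyval_self hchain g a
  exact le_antisymm (key x y h') (key y x h'.symm)

include hcard hg hg1 in
/-- Convexity: anything lex-between two elements above `x` is above `x`. -/
lemma le_of_pkey_between {x a b c : P} (hxa : x ≤ a) (hxc : x ≤ c)
    (hab : toLex (pkey g (n := n) a) ≤ toLex (pkey g b))
    (hbc : toLex (pkey g (n := n) b) ≤ toLex (pkey g c)) : x ≤ b := by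
  set d := (Dset x).card with hd
  have hd1 : 1 ≤ d := Dset_card_pos x
  have hdn : d ≤ n := hcard ▸ Dset_card_le x
  -- all indices below d agree with x's key
  have hagree : ∀ j : ℕ, j < d → keyval g b j = keyval g x j := by
    intro j hjd
    by_contra hbad
    -- take the least bad index
    have hex : ∃ j, j < d ∧ keyval g b j ≠ keyval g x j := ⟨j, hjd, hbad⟩
    obtain ⟨hid, hibad⟩ := Nat.find_spec hex
    set i := Nat.find hex with hi
    have hleast : ∀ m, m < i → m < d → keyval g b m = keyval g x m := by
      intro m hm hmd
      have := Nat.find_min hex hm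
      by_contra hne
      exact this ⟨hmd, hne⟩
    have hin : i < n := lt_of_lt_of_le hid hdn
    set iF : Fin n := ⟨i, hin⟩ with hiF
    have haa : ∀ j : ℕ, j < d → keyval g a j = keyval g x j :=
      fun j hj => (keyval_agree hchain g hxa (by omega)).symm
    have hcc : ∀ j : ℕ, j < d → keyval g c j = keyval g x j :=
      fun j hj => (keyval_agree hchain g hxc (by omega)).symm
    -- from hab: keyval x i < keyval b i
    have hA : keyval g x i < keyval g b i := by
      rcases eq_or_lt_of_le hab with heq | hlt
      · have := congrFun (toLex.injective.eq_iff.mp heq) iF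
        simp only [pkey] at this
        exact absurd (this ▸ haa i hid) hibad
      · obtain ⟨k, hk1, hk2⟩ := hlt
        have hk2' : keyval g a k.val < keyval g b k.val := hk2
        rcases lt_trichotomy k iF with hki | hki | hki
        · exfalso
          have hkd : k.val < d := lt_trans (by exact_mod_cast hki) hid
          have h1 : keyval g a k.val = keyval g x k.val := haa k.val hkd
          have h2 : keyval g b k.val = keyval g x k.val :=
            hleast k.val (by exact_mod_cast hki) hkd
          exact absurd (h1.trans h2.symm) (ne_of_lt hk2')
        · have hki' : (k : ℕ) = i := by rw [hki]
          calc keyval g x i = keyval g a i := (haa i hid).symm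
            _ < keyval g b i := hki' ▸ hk2'
        · have h3 : keyval g a i = keyval g b i := hk1 iF hki
          exact absurd (h3.symm.trans (haa i hid)) hibad
    -- from hbc: keyval b i < keyval x i
    have hB : keyval g b i < keyval g x i := by
      rcases eq_or_lt_of_le hbc with heq | hlt
      · have := congrFun (toLex.injective.eq_iff.mp heq) iF
        simp only [pkey] at this
        exact absurd (this.trans (hcc i hid)) hibad
      · obtain ⟨k, hk1, hk2⟩ := hlt
        have hk2' : keyval g b k.val < keyval g c k.val := hk2
        rcases lt_trichotomy k iF with hki | hki | hki
        · exfalso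
          have hkd : k.val < d := lt_trans (by exact_mod_cast hki) hid
          have h1 : keyval g c k.val = keyval g x k.val := hcc k.val hkd
          have h2 : keyval g b k.val = keyval g x k.val :=
            hleast k.val (by exact_mod_cast hki) hkd
          exact absurd (h2.trans h1.symm) (ne_of_lt hk2')
        · have hki' : (k : ℕ) = i := by rw [hki]
          calc keyval g b i = keyval g b k.val := by rw [hki']
            _ < keyval g c k.val := hk2'
            _ = keyval g x i := by rw [hki']; exact hcc i hid
        · have h3 : keyval g b i = keyval g c i := hk1 iF hki
          exact absurd (h3.trans (hcc i hid)) hibad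
    omega
  have hfin : keyval g b (d - 1) = keyval g x (d - 1) := hagree (d - 1) (by omega)
  rw [keyval_self hchain] at hfin
  exact le_of_keyval_eq hchain g hg hg1 hfin

end ForestAux

/-- A finite forest order (every principal down-set is a chain) on `n ≥ 1`
elements admits an ordering `e : Fin n → P` such that the sign matrix
`S i j = 1` if `e i ≤ e j`, `−1` otherwise, has at most `2` sign changes in
every row. -/
theorem forest_order_sign_matrix_two_sign_changes
    (P : Type*) [Fintype P] [PartialOrder P] (n : ℕ)
    (hcard : Fintype.card P = n) (hn : 1 ≤ n)
    (hchain : ∀ x : P, IsChain (· ≤ ·) {y : P | y ≤ x}) :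
    ∃ e : Fin n → P, Function.Bijective e ∧
      ∀ i : Fin n,
        (Finset.univ.filter (fun j : Fin n =>
          ∃ h : (j : ℕ) + 1 < n,
            (if e i ≤ e j then (1 : ℤ) else -1) ≠
              (if e i ≤ e ⟨(j : ℕ) + 1, h⟩ then (1 : ℤ) else -1))).card ≤ 2 := by
  classical
  set g : P → ℕ := fun z => ((Fintype.equivFin P) z).val + 1 with hgdef
  have hg : Function.Injective g := by
    intro a b hab
    have : ((Fintype.equivFin P) a).val = ((Fintype.equivFin P) b).val := by
      simpa [hgdef] using hab
    exact (Fintype.equivFin P).injective (Fin.val_injective this)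
  have hg1 : ∀ z, 1 ≤ g z := fun z => Nat.le_add_left 1 _
  set r : P → P → Prop := fun x y => toLex (pkey g (n := n) x) ≤ toLex (pkey g y) with hrdef
  have hr : ∀ a b : P, r a b ↔ toLex (pkey g (n := n) a) ≤ toLex (pkey g b) := by
    intro a b; exact Iff.rfl
  have htot : ∀ a b : Lex (Fin n → ℕ), a ≤ b ∨ b ≤ a := by
    intro a b
    exact le_total a b
  haveI : IsTotal P r := ⟨fun a b => by rw [hr, hr]; exact htot _ _⟩
  haveI : IsTrans P r := ⟨fun a b c hab hbc => by
    rw [hr] at hab hbc ⊢; exact le_trans hab hbc⟩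
  haveI : IsAntisymm P r := ⟨fun a b hab hba => by
    rw [hr] at hab hba
    exact pkey_injective hchain g hg hg1 hcard (le_antisymm hab hba)⟩
  haveI : DecidableRel r := Classical.decRel _
  set l : List P := Finset.sort Finset.univ r with hldef
  have hlen : l.length = n := by
    rw [hldef, Finset.length_sort, Finset.card_univ, hcard]
  set e : Fin n → P := fun i => l.get (Fin.cast hlen.symm i) with hedef
  have hinj : Function.Injective e := by
    intro a b hab
    have := (List.nodup_iff_injective_get.mp (Finset.sort_nodup Finset.univ r)) hab
    exact Fin.cast_injective _ this
  have hbij : Function.Bijective e :=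
    (Fintype.bijective_iff_injective_and_card e).mpr ⟨hinj, by simp [hcard]⟩
  have hsort : ∀ i j : Fin n, i ≤ j → r (e i) (e j) := by
    intro i j hij
    rcases eq_or_lt_of_le hij with rfl | h
    · exact le_rfl
    · exact (Finset.pairwise_sort Finset.univ r).rel_get_of_lt (by simpa using h)
  -- order in P implies order of indices
  have F1 : ∀ i j : Fin n, e i ≤ e j → i ≤ j := by
    intro i j hij
    by_contra hc
    push_neg at hc
    have h1 : r (e j) (e i) := hsort j i hc.le
    have h2 : r (e i) (e j) := by rw [hr]; exact pkey_le_of_le hchain g hg1 hcard hij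
    rw [hr] at h1 h2
    have := hinj (pkey_injective hchain g hg hg1 hcard (le_antisymm h2 h1))
    omega
  have F2 : ∀ i a b c : Fin n, e i ≤ e a → e i ≤ e c → a ≤ b → b ≤ c → e i ≤ e b := by
    intro i a b c hia hic hab hbc
    have h1 := hsort a b hab
    have h2 := hsort b c hbc
    rw [hr] at h1 h2
    exact le_of_pkey_between hchain g hg hg1 hcard hia hic h1 h2
  refine ⟨e, hbij, ?_⟩
  intro i
  by_contra hcon
  push_neg at hcon
  obtain ⟨a, b, c, ha, hb, hc, hab, hac, hbc⟩ :=
    Finset.two_lt_card_iff.mp hcon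
  -- classify each element of the filter
  have classify : ∀ j : Fin n, j ∈ (Finset.univ.filter (fun j : Fin n =>
      ∃ h : (j : ℕ) + 1 < n,
        (if e i ≤ e j then (1 : ℤ) else -1) ≠
          (if e i ≤ e ⟨(j : ℕ) + 1, h⟩ then (1 : ℤ) else -1))) →
      ((j : ℕ) + 1 = (i : ℕ)) ∨
        (e i ≤ e j ∧ ∀ h : (j : ℕ) + 1 < n, ¬ e i ≤ e ⟨(j : ℕ) + 1, h⟩) := by
    intro j hj
    obtain ⟨h, hne⟩ := (Finset.mem_filter.mp hj).2
    set j' : Fin n := ⟨(j : ℕ) + 1, h⟩ with hj'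
    by_cases hQj : e i ≤ e j
    · right
      refine ⟨hQj, fun h' hQj' => ?_⟩
      exact hne (by simp [hQj, hj', hQj'])
    · left
      have hQj' : e i ≤ e j' := by
        by_contra hQ'
        exact hne (by simp [hQj, hQ'])
      have h1 : i ≤ j' := F1 i j' hQj'
      have h2 : ¬ i ≤ j := by
        intro hij
        exact hQj (F2 i i j j' le_rfl hQj' hij (by simp [hj', Fin.le_def]))
      simp only [Fin.le_def, hj'] at h1 h2
      omega
  -- type A is unique
  have uniqA : ∀ j k : Fin n, (j : ℕ) + 1 = (i : ℕ) → (k : ℕ) + 1 = (i : ℕ) → j = k := by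
    intro j k h1 h2
    exact Fin.ext (by omega)
  -- type B is unique
  have uniqB : ∀ j k : Fin n,
      (e i ≤ e j ∧ ∀ h : (j : ℕ) + 1 < n, ¬ e i ≤ e ⟨(j : ℕ) + 1, h⟩) →
      (e i ≤ e k ∧ ∀ h : (k : ℕ) + 1 < n, ¬ e i ≤ e ⟨(k : ℕ) + 1, h⟩) → j = k := by
    intro j k ⟨hj1, hj2⟩ ⟨hk1, hk2⟩
    by_contra hne
    rcases lt_or_gt_of_ne (fun h => hne h) with hlt | hlt
    · -- j < k : then j+1 ≤ k, so e i ≤ e ⟨j+1⟩ by convexity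
      have hjn : (j : ℕ) + 1 < n := lt_of_le_of_lt (by exact_mod_cast hlt) k.isLt
      apply hj2 hjn
      exact F2 i j ⟨(j : ℕ) + 1, hjn⟩ k hj1 hk1 (by simp [Fin.le_def]) (by
        simp [Fin.le_def]; omega)
    · have hkn : (k : ℕ) + 1 < n := lt_of_le_of_lt (by exact_mod_cast hlt) j.isLt
      apply hk2 hkn
      exact F2 i k ⟨(k : ℕ) + 1, hkn⟩ j hk1 hj1 (by simp [Fin.le_def]) (by
        simp [Fin.le_def]; omega)
  rcases classify a ha with hA1 | hB1
  all_goals rcases classify b hb with hA2 | hB2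
  all_goals rcases classify c hc with hA3 | hB3
  all_goals first
    | exact hab (uniqA a b hA1 hA2)
    | exact hac (uniqA a c hA1 hA3)
    | exact hbc (uniqA b c hA2 hA3)
    | exact hab (uniqB a b hB1 hB2)
    | exact hac (uniqB a c hB1 hB3)
    | exact hbc (uniqB b c hB2 hB3)
end
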